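/- Let G_m(ϑ) = 2π/ϑ and F(ϑ) = (1 - exp(-ϑ/(2ē))) / (1 - exp(-π/ē)) for ϑ ∈ (0, π/2) and fixed ē > 0. Then the product G_m(ϑ)·F(ϑ) is a strictly decreasing function of ϑ. -/

import Mathlib

lemma key_anti : StrictAntiOn (fun x : ℝ => (1 - Real.exp (-x)) / x) (Set.Ioi 0) := by
  apply strictAntiOn_of_deriv_neg (convex_Ioi 0)
  · apply ContinuousOn.div
    · fun_prop
    · fun_prop
    · intro x hx
      exact ne_of_gt hx
  · intro x hx
    rw [interior_Ioi] at hx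
    have hx0 : (0:ℝ) < x := hx
    have hd : HasDerivAt (fun x : ℝ => (1 - Real.exp (-x)) / x)
        ((Real.exp (-x) * x - (1 - Real.exp (-x)) * 1) / x ^ 2) x := by
      have h1 : HasDerivAt (fun x : ℝ => 1 - Real.exp (-x)) (Real.exp (-x)) x := by
        have := (Real.hasDerivAt_exp (-x)).comp x (hasDerivAt_neg x)
        refine ((hasDerivAt_const x (1:ℝ)).sub this).congr_deriv ?_
        simp
      exact h1.div (hasDerivAt_id x) (ne_of_gt hx0)
    rw [hd.deriv]
    apply div_neg_of_neg_of_pos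
    · have h2 : x + 1 < Real.exp x := Real.add_one_lt_exp (ne_of_gt hx0)
      have h3 : Real.exp (-x) * Real.exp x = 1 := by
        rw [← Real.exp_add]; simp
      have h4 : 0 < Real.exp x := Real.exp_pos x
      nlinarith [Real.exp_pos (-x)]
    · positivity

theorem stmt2 (e : ℝ) (he : 0 < e) :
    StrictAntiOn (fun θ : ℝ =>
      (2 * Real.pi / θ) *
        ((1 - Real.exp (-θ / (2 * e))) / (1 - Real.exp (-Real.pi / e))))
      (Set.Ioo 0 (Real.pi / 2)) := by
  have hC : 0 < 1 - Real.exp (-Real.pi / e) := by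
    have : Real.exp (-Real.pi / e) < 1 := by
      rw [Real.exp_lt_one_iff]
      have hpi := Real.pi_pos
      exact div_neg_of_neg_of_pos (by linarith) he
    linarith
  intro a ha b hb hab
  have ha0 : 0 < a := ha.1
  have hb0 : 0 < b := hb.1
  have key : ∀ θ : ℝ, 0 < θ →
      (2 * Real.pi / θ) * ((1 - Real.exp (-θ / (2 * e))) / (1 - Real.exp (-Real.pi / e)))
        = (Real.pi / e / (1 - Real.exp (-Real.pi / e))) *
            ((1 - Real.exp (-(θ / (2 * e)))) / (θ / (2 * e))) := by
    intro θ hθ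
    rw [neg_div]
    field_simp
  beta_reduce
  rw [key a ha0, key b hb0]
  have hu : a / (2 * e) ∈ Set.Ioi (0:ℝ) := Set.mem_Ioi.mpr (by positivity)
  have hv : b / (2 * e) ∈ Set.Ioi (0:ℝ) := Set.mem_Ioi.mpr (by positivity)
  have hlt : a / (2 * e) < b / (2 * e) := by
    gcongr
  have := key_anti hu hv hlt
  have hc : 0 < Real.pi / e / (1 - Real.exp (-Real.pi / e)) := by
    have hpi := Real.pi_pos
    positivity
  exact mul_lt_mul_of_pos_left this hc
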